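/- Every point of I₀ × 3𝕋 is a peak point for O(cl D): for every a ∈ I₀ = (1/2, 1) and every b ∈ ℂ with |b| = 3 there exists a function g holomorphic on an open neighborhood of cl D such that g(a, b) = 1 and |g(z, w)| < 1 for all (z, w) ∈ cl D \ {(a, b)}. -/

import Mathlib

open Set Complex

noncomputable section

/-- The bounded Hartogs domain `D ⊂ ℂ²` from the paper. -/
def domD : Set (ℂ × ℂ) :=
  {p | ∃ r φ : ℝ, 1 / 2 < r ∧ r < 1 ∧ 0 < φ ∧ φ < 2 * Real.pi ∧
    p.1 = (r : ℂ) * Complex.exp (φ * Complex.I) ∧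
    (φ ≤ Real.pi / 2 → ‖p.2‖ < 1) ∧
    (Real.pi / 2 < φ → φ < 3 * Real.pi / 2 → ‖p.2‖ < 3) ∧
    (3 * Real.pi / 2 ≤ φ → 2 < ‖p.2‖ ∧ ‖p.2‖ < 3)}

/-- `K` is norming for the family `F` of functions on `closure S`. -/
def IsNorming {E : Type*} [TopologicalSpace E] (S K : Set E) (F : Set (E → ℂ)) : Prop :=
  ∀ f ∈ F, sSup ((fun p => ‖(f p)‖) '' K) =
    sSup ((fun p => ‖(f p)‖) '' closure S)

/-- `O(cl S)`: functions extending holomorphically to an open neighborhood of `closure S`. -/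
def Ocl {E : Type*} [NormedAddCommGroup E] [NormedSpace ℂ E] (S : Set E) :
    Set (E → ℂ) :=
  {f | ∃ U : Set E, IsOpen U ∧ closure S ⊆ U ∧ DifferentiableOn ℂ f U}

/-- `A(S)`: functions continuous on `closure S` and holomorphic on `S`. -/
def Acl {E : Type*} [NormedAddCommGroup E] [NormedSpace ℂ E] (S : Set E) :
    Set (E → ℂ) :=
  {f | ContinuousOn f (closure S) ∧ DifferentiableOn ℂ f S}

/-- `K` is the minimal compact norming set for the family `F` on `closure S`
(i.e. the Shilov-type boundary associated with `F`). -/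
def IsShilovFor {E : Type*} [NormedAddCommGroup E] [NormedSpace ℂ E]
    (S : Set E) (F : Set (E → ℂ)) (K : Set E) : Prop :=
  IsCompact K ∧ K ⊆ closure S ∧ IsNorming S K F ∧
    ∀ K' : Set E, IsCompact K' → K' ⊆ closure S → IsNorming S K' F → K ⊆ K'

namespace Stmt17Aux

def MM (p : ℂ × ℂ) : ℂ :=
  if p.1.re < |p.1.im| then Complex.log (-p.1) + Real.pi * Complex.I
  else if 3/2 < ‖p.2‖ then Complex.log p.1 + 2 * Real.pi * Complex.I
  else Complex.log p.1

def UU : Set (ℂ × ℂ) :=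
  {p | p.1.re < |p.1.im| ∨ (0 < p.1.re ∧ -p.1.re/2 < p.1.im ∧ ‖p.2‖ < 3/2)
      ∨ (0 < p.1.re ∧ p.1.im < p.1.re/2 ∧ 3/2 < ‖p.2‖)}

def TT : Set (ℂ × ℂ) :=
  {p | 1/2 ≤ ‖p.1‖ ∧ ‖p.1‖ ≤ 1 ∧
    ((0 ≤ p.1.re ∧ 0 ≤ p.1.im ∧ ‖p.2‖ ≤ 1) ∨
     (p.1.re ≤ 0 ∧ ‖p.2‖ ≤ 3) ∨
     (0 ≤ p.1.re ∧ p.1.im ≤ 0 ∧ 2 ≤ ‖p.2‖ ∧ ‖p.2‖ ≤ 3))}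


lemma isOpen_UU : IsOpen UU := by
  apply IsOpen.union
  · exact isOpen_lt (continuous_re.comp continuous_fst)
      ((_root_.continuous_abs).comp (continuous_im.comp continuous_fst))
  apply IsOpen.union
  · refine IsOpen.inter (isOpen_lt continuous_const (continuous_re.comp continuous_fst)) ?_
    refine IsOpen.inter (isOpen_lt (by fun_prop) (continuous_im.comp continuous_fst)) ?_
    exact isOpen_lt (continuous_norm.comp continuous_snd) continuous_const
  · refine IsOpen.inter (isOpen_lt continuous_const (continuous_re.comp continuous_fst)) ?_
    refine IsOpen.inter (isOpen_lt (continuous_im.comp continuous_fst) (by fun_prop)) ?_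
    exact isOpen_lt continuous_const (continuous_norm.comp continuous_snd)

lemma isClosed_TT : IsClosed TT := by
  have hre : Continuous fun p : ℂ × ℂ => p.1.re := continuous_re.comp continuous_fst
  have him : Continuous fun p : ℂ × ℂ => p.1.im := continuous_im.comp continuous_fst
  have hab1 : Continuous fun p : ℂ × ℂ => ‖p.1‖ :=
    continuous_norm.comp continuous_fst
  have hab2 : Continuous fun p : ℂ × ℂ => ‖p.2‖ :=
    continuous_norm.comp continuous_snd
  refine IsClosed.inter (isClosed_le continuous_const hab1) ?_
  refine IsClosed.inter (isClosed_le hab1 continuous_const) ?_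
  apply IsClosed.union
  · exact (isClosed_le continuous_const hre).inter
      ((isClosed_le continuous_const him).inter (isClosed_le hab2 continuous_const))
  apply IsClosed.union
  · exact (isClosed_le hre continuous_const).inter (isClosed_le hab2 continuous_const)
  · exact (isClosed_le continuous_const hre).inter
      ((isClosed_le him continuous_const).inter
        ((isClosed_le continuous_const hab2).inter (isClosed_le hab2 continuous_const)))


lemma MB_eq_of_im_pos {z : ℂ} (h : 0 < z.im) :
    Complex.log (-z) + Real.pi * Complex.I = Complex.log z := by
  apply Complex.ext
  · simp [Complex.log_re]
  · simp [Complex.log_im, Complex.arg_neg_eq_arg_sub_pi_of_im_pos h]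

lemma MB_eq_of_im_neg {z : ℂ} (h : z.im < 0) :
    Complex.log (-z) + Real.pi * Complex.I
      = Complex.log z + 2 * Real.pi * Complex.I := by
  apply Complex.ext
  · simp [Complex.log_re]
  · simp [Complex.log_im, Complex.arg_neg_eq_arg_add_pi_of_im_neg h]
    ring

lemma diff_MM : DifferentiableOn ℂ MM UU := by
  have hre : Continuous fun q : ℂ × ℂ => q.1.re := Complex.continuous_re.comp continuous_fst
  have him : Continuous fun q : ℂ × ℂ => |q.1.im| :=
    _root_.continuous_abs.comp (Complex.continuous_im.comp continuous_fst)
  have him' : Continuous fun q : ℂ × ℂ => q.1.im := Complex.continuous_im.comp continuous_fst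
  have hab : Continuous fun q : ℂ × ℂ => ‖q.2‖ :=
    continuous_norm.comp continuous_snd
  intro p hp
  rcases lt_trichotomy p.1.re |p.1.im| with h1 | h1 | h1
  · -- MB branch
    have hsl : -p.1 ∈ Complex.slitPlane := by
      rw [Complex.mem_slitPlane_iff]
      rcases eq_or_ne p.1.im 0 with h | h
      · left; simp only [Complex.neg_re]; rw [h] at h1; simp at h1; linarith
      · right; simpa using h
    have hF : DifferentiableAt ℂ (fun q : ℂ × ℂ =>
        Complex.log (-q.1) + Real.pi * Complex.I) p := by
      exact (((Complex.differentiableAt_log hsl).comp p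
        (differentiableAt_fst.neg))).add_const _
    refine (hF.congr_of_eventuallyEq ?_).differentiableWithinAt
    refine Filter.eventuallyEq_of_mem (((isOpen_lt hre him).mem_nhds h1)) ?_
    intro q hq
    simp only [MM, if_pos (Set.mem_setOf.mp hq)]
  · -- boundary re = |im|
    have h0 : ¬ p.1.re < |p.1.im| := by rw [h1]; exact lt_irrefl _
    rcases hp with h | h | h
    · exact absurd h h0
    · obtain ⟨hre0, him0, hw⟩ := h
      have himpos : 0 < p.1.im := by
        rcases abs_cases p.1.im with ⟨he, _⟩ | ⟨he, hlt⟩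
        · linarith [h1.trans he]
        · exfalso; linarith [h1.trans he]
      have hsl : p.1 ∈ Complex.slitPlane := Or.inr (ne_of_gt himpos)
      have hF : DifferentiableAt ℂ (fun q : ℂ × ℂ => Complex.log q.1) p :=
        (Complex.differentiableAt_log hsl).comp p differentiableAt_fst
      refine (hF.congr_of_eventuallyEq ?_).differentiableWithinAt
      refine Filter.eventuallyEq_of_mem
        (((isOpen_lt continuous_const him').inter
          (isOpen_lt hab continuous_const)).mem_nhds ⟨himpos, hw⟩) ?_
      intro q hq
      obtain ⟨hq1, hq2⟩ := hq
      simp only [MM]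
      by_cases hc : q.1.re < |q.1.im|
      · rw [if_pos hc, MB_eq_of_im_pos hq1]
      · rw [if_neg hc, if_neg (not_lt.mpr hq2.le)]
    · obtain ⟨hre0, him0, hw⟩ := h
      have himneg : p.1.im < 0 := by
        rcases abs_cases p.1.im with ⟨he, hge⟩ | ⟨he, hlt⟩
        · exfalso; linarith [h1.trans he]
        · exact hlt
      have hsl : p.1 ∈ Complex.slitPlane := Or.inr (ne_of_lt himneg)
      have hF : DifferentiableAt ℂ (fun q : ℂ × ℂ =>
          Complex.log q.1 + 2 * Real.pi * Complex.I) p :=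
        ((Complex.differentiableAt_log hsl).comp p differentiableAt_fst).add_const _
      refine (hF.congr_of_eventuallyEq ?_).differentiableWithinAt
      refine Filter.eventuallyEq_of_mem
        (((isOpen_lt him' continuous_const).inter
          (isOpen_lt continuous_const hab)).mem_nhds ⟨himneg, hw⟩) ?_
      intro q hq
      obtain ⟨hq1, hq2⟩ := hq
      simp only [MM]
      by_cases hc : q.1.re < |q.1.im|
      · rw [if_pos hc, MB_eq_of_im_neg hq1]
      · rw [if_neg hc, if_pos (Set.mem_setOf.mp hq2)]
  · -- |im| < re
    have hrepos : 0 < p.1.re := lt_of_le_of_lt (abs_nonneg _) h1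
    have h0 : ¬ p.1.re < |p.1.im| := not_lt.mpr h1.le
    have hsl : p.1 ∈ Complex.slitPlane := Or.inl hrepos
    rcases hp with h | ⟨_, _, hw⟩ | ⟨_, _, hw⟩
    · exact absurd h h0
    · have hF : DifferentiableAt ℂ (fun q : ℂ × ℂ => Complex.log q.1) p :=
        (Complex.differentiableAt_log hsl).comp p differentiableAt_fst
      refine (hF.congr_of_eventuallyEq ?_).differentiableWithinAt
      refine Filter.eventuallyEq_of_mem
        (((isOpen_lt him hre).inter (isOpen_lt hab continuous_const)).mem_nhds ⟨h1, hw⟩) ?_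
      intro q hq
      obtain ⟨hq1, hq2⟩ := hq
      simp only [MM]
      rw [if_neg (not_lt.mpr hq1.le), if_neg (not_lt.mpr hq2.le)]
    · have hF : DifferentiableAt ℂ (fun q : ℂ × ℂ =>
          Complex.log q.1 + 2 * Real.pi * Complex.I) p :=
        ((Complex.differentiableAt_log hsl).comp p differentiableAt_fst).add_const _
      refine (hF.congr_of_eventuallyEq ?_).differentiableWithinAt
      refine Filter.eventuallyEq_of_mem
        (((isOpen_lt him hre).inter (isOpen_lt continuous_const hab)).mem_nhds ⟨h1, hw⟩) ?_
      intro q hq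
      obtain ⟨hq1, hq2⟩ := hq
      simp only [MM]
      rw [if_neg (not_lt.mpr hq1.le), if_pos (Set.mem_setOf.mp hq2)]


lemma MM_spec {p : ℂ × ℂ} (hp : p ∈ TT) :
    (MM p).re = Real.log (‖p.1‖) ∧ 0 ≤ (MM p).im ∧ (MM p).im ≤ 2 * Real.pi ∧
      ((MM p).im = 2 * Real.pi → p.1 = ((‖p.1‖ : ℝ) : ℂ)) := by
  obtain ⟨hlo, hhi, hcase⟩ := hp
  have hπ := Real.pi_pos
  by_cases h1 : p.1.re < |p.1.im|
  · have hre : (MM p).re = Real.log (‖p.1‖) := by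
      simp only [MM, if_pos h1]; simp [Complex.log_re]
    have him : (MM p).im = Complex.arg (-p.1) + Real.pi := by
      simp only [MM, if_pos h1]; simp [Complex.log_im]
    have h2 := Complex.arg_le_pi (-p.1)
    have h3 := Complex.neg_pi_lt_arg (-p.1)
    refine ⟨hre, by rw [him]; linarith, by rw [him]; linarith, ?_⟩
    intro h4
    exfalso
    rw [him] at h4
    have h5 : Complex.arg (-p.1) = Real.pi := by linarith
    rw [Complex.arg_eq_pi_iff] at h5
    obtain ⟨h6, h7⟩ := h5
    have h6' : 0 < p.1.re := by simpa using h6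
    have h7' : p.1.im = 0 := by simpa using h7
    rw [h7'] at h1; simp at h1; linarith
  · push_neg at h1
    have hre0 : 0 ≤ p.1.re := le_trans (abs_nonneg _) h1
    have habs2 : ‖p.1‖ ≤ |p.1.re| + |p.1.im| := Complex.norm_le_abs_re_add_abs_im p.1
    have hrepos : 0 < p.1.re := by
      rcases eq_or_lt_of_le hre0 with h | h
      · exfalso
        have h2 : |p.1.im| ≤ 0 := by rw [← h] at h1; exact h1
        have h3 : |p.1.re| = 0 := by rw [← h]; simp
        rw [h3] at habs2
        linarith [abs_nonneg p.1.im]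
      · exact h
    by_cases h2 : 3/2 < ‖p.2‖
    · have hC : p.1.im ≤ 0 := by
        rcases hcase with ⟨_, _, hw⟩ | ⟨hB, _⟩ | ⟨_, him, _⟩
        · linarith
        · linarith
        · exact him
      have hre : (MM p).re = Real.log (‖p.1‖) := by
        simp only [MM, if_neg (not_lt.mpr h1), if_pos h2]; simp [Complex.log_re]
      have him : (MM p).im = Complex.arg p.1 + 2 * Real.pi := by
        simp only [MM, if_neg (not_lt.mpr h1), if_pos h2]; simp [Complex.log_im]
      have harg_le0 : Complex.arg p.1 ≤ 0 := by
        rcases eq_or_lt_of_le hC with hh | hh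
        · rw [Complex.arg_eq_zero_iff.mpr ⟨hre0, hh⟩]
        · exact (Complex.arg_neg_iff.mpr hh).le
      have h3 := Complex.neg_pi_lt_arg p.1
      refine ⟨hre, by rw [him]; linarith, by rw [him]; linarith, ?_⟩
      intro h4
      rw [him] at h4
      have h5 : Complex.arg p.1 = 0 := by linarith
      rw [Complex.arg_eq_zero_iff] at h5
      obtain ⟨_, h7⟩ := h5
      have h8 : p.1 = ((p.1.re : ℝ) : ℂ) := Complex.ext rfl (by simpa using h7)
      have h9 : ‖p.1‖ = p.1.re := by
        rw [h8]; simp [Complex.norm_real, Real.norm_eq_abs, _root_.abs_of_nonneg hre0]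
      rw [h9]; exact h8
    · have hA : 0 ≤ p.1.im := by
        rcases hcase with ⟨_, him, _⟩ | ⟨hB, _⟩ | ⟨_, _, hw2, _⟩
        · exact him
        · linarith
        · push_neg at h2; linarith
      have hre : (MM p).re = Real.log (‖p.1‖) := by
        simp only [MM, if_neg (not_lt.mpr h1), if_neg h2]; simp [Complex.log_re]
      have him : (MM p).im = Complex.arg p.1 := by
        simp only [MM, if_neg (not_lt.mpr h1), if_neg h2]; simp [Complex.log_im]
      have h3 := Complex.arg_le_pi p.1
      refine ⟨hre, by rw [him]; exact Complex.arg_nonneg_iff.mpr hA,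
        by rw [him]; linarith, ?_⟩
      intro h4
      exfalso
      rw [him] at h4
      linarith


lemma domD_subset_TT : domD ⊆ TT := by
  rintro p ⟨r, φ, hr1, hr2, hφ1, hφ2, hz, hA, hB, hC⟩
  have hπ := Real.pi_pos
  have habs : ‖p.1‖ = r := by
    rw [hz, norm_mul, Complex.norm_real, Real.norm_eq_abs, Complex.norm_exp_ofReal_mul_I,
      _root_.abs_of_pos (by linarith : (0:ℝ) < r)]
    ring
  have hre : p.1.re = r * Real.cos φ := by
    rw [hz]
    simp [Complex.mul_re, Complex.exp_ofReal_mul_I_re, Complex.exp_ofReal_mul_I_im]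
  have him : p.1.im = r * Real.sin φ := by
    rw [hz]
    simp [Complex.mul_im, Complex.exp_ofReal_mul_I_re, Complex.exp_ofReal_mul_I_im]
  refine ⟨by rw [habs]; linarith, by rw [habs]; linarith, ?_⟩
  rcases le_or_gt φ (Real.pi/2) with h | h
  · left
    have hcos : 0 ≤ Real.cos φ := Real.cos_nonneg_of_mem_Icc ⟨by linarith, h⟩
    have hsin : 0 ≤ Real.sin φ := Real.sin_nonneg_of_nonneg_of_le_pi hφ1.le (by linarith)
    exact ⟨by rw [hre]; positivity, by rw [him]; positivity, (hA h).le⟩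
  · rcases lt_or_ge φ (3*Real.pi/2) with h3 | h3
    · right; left
      have hcos : Real.cos φ ≤ 0 :=
        Real.cos_nonpos_of_pi_div_two_le_of_le h.le (by linarith)
      refine ⟨by rw [hre]; nlinarith, (hB h h3).le⟩
    · right; right
      have hcos : 0 ≤ Real.cos φ := by
        rw [← Real.cos_sub_two_pi]
        exact Real.cos_nonneg_of_mem_Icc ⟨by linarith, by linarith⟩
      have hsin2 : 0 ≤ Real.sin (2*Real.pi - φ) :=
        Real.sin_nonneg_of_nonneg_of_le_pi (by linarith) (by linarith)
      rw [Real.sin_two_pi_sub] at hsin2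
      have hsin : Real.sin φ ≤ 0 := by linarith
      exact ⟨by rw [hre]; positivity, by rw [him]; nlinarith, (hC h3).1.le, (hC h3).2.le⟩

lemma TT_subset_UU : TT ⊆ UU := by
  rintro p ⟨hlo, hhi, hcase⟩
  by_cases h1 : p.1.re < |p.1.im|
  · left; exact h1
  push_neg at h1
  have hre0 : 0 ≤ p.1.re := le_trans (abs_nonneg _) h1
  have habs2 : ‖p.1‖ ≤ |p.1.re| + |p.1.im| := Complex.norm_le_abs_re_add_abs_im p.1
  have hrepos : 0 < p.1.re := by
    rcases eq_or_lt_of_le hre0 with h | h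
    · exfalso
      have h2 : |p.1.im| ≤ 0 := by rw [← h] at h1; exact h1
      have h3 : |p.1.re| = 0 := by rw [← h]; simp
      rw [h3] at habs2
      linarith [abs_nonneg p.1.im]
    · exact h
  rcases hcase with ⟨_, him, hw⟩ | ⟨hB, _⟩ | ⟨_, him, hw2, _⟩
  · right; left; exact ⟨hrepos, by linarith, by linarith⟩
  · exfalso; linarith
  · right; right; exact ⟨hrepos, by linarith, by linarith⟩


lemma quad_le (x t : ℝ) (h1 : t ≤ 0) (h3 : -(2*Real.pi) ≤ t) : 7*t + t^2 - x^2 ≤ 0 := by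
  have hπ' := Real.pi_lt_d2
  have h7t : 0 ≤ 7 + t := by linarith
  nlinarith [mul_nonneg (neg_nonneg.mpr h1) h7t, sq_nonneg x]

lemma quad_eq (x t : ℝ) (h1 : t ≤ 0) (h3 : -(2*Real.pi) ≤ t)
    (h0 : 7*t + t^2 - x^2 = 0) : x = 0 ∧ t = 0 := by
  have hπ' := Real.pi_lt_d2
  have h7t : 0 ≤ 7 + t := by linarith
  have hprod : 0 ≤ (-t) * (7 + t) := mul_nonneg (neg_nonneg.mpr h1) h7t
  have hsq : x^2 = 0 := le_antisymm (by nlinarith) (sq_nonneg _)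
  have hx0 : x = 0 := pow_eq_zero_iff two_ne_zero |>.mp hsq
  refine ⟨hx0, ?_⟩
  have h7t2 : 7*t + t^2 = 0 := by rw [hx0] at h0; linarith [sq_nonneg (0:ℝ)]
  rcases eq_or_lt_of_le h1 with h | h
  · exact h
  · exfalso
    nlinarith [mul_neg_of_neg_of_pos h (show (0:ℝ) < 7 + t by linarith)]

lemma prod_le_one (u E : ℝ) (hu0 : 0 ≤ u) (hu : u ≤ 3) (hE0 : 0 < E) (hE : E ≤ 1) :
    u/3*E ≤ 1 := by nlinarith

lemma prod_eq_one (u E : ℝ) (hu0 : 0 ≤ u) (hu : u ≤ 3) (hE0 : 0 < E) (hE : E ≤ 1)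
    (h : u/3*E = 1) : E = 1 := by nlinarith

lemma peak_lt (f : ℂ) (h1 : ‖f‖ ≤ 1) (hne : f ≠ 1) :
    ‖((1 + f)/2)‖ < 1 := by
  have hnormsq : f.re^2 + f.im^2 ≤ 1 := by
    have h := Complex.sq_norm f
    rw [Complex.normSq_apply] at h
    nlinarith [norm_nonneg f]
  have hfre_le : f.re ≤ 1 := le_trans (Complex.re_le_norm f) h1
  have hfre : f.re < 1 := by
    rcases lt_or_eq_of_le hfre_le with h | h
    · exact h
    · exfalso
      have him' : f.im = 0 := by
        have : f.im^2 ≤ 0 := by nlinarith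
        have h2 : f.im^2 = 0 := le_antisymm this (sq_nonneg _)
        exact pow_eq_zero_iff two_ne_zero |>.mp h2
      exact hne (Complex.ext (by simp [h]) (by simp [him']))
  rw [norm_div, (by norm_num : ‖(2:ℂ)‖ = 2)]
  have h1f : ‖(1 + f)‖ < 2 := by
    have hsq : (‖(1+f)‖)^2 < 4 := by
      rw [Complex.sq_norm, Complex.normSq_apply]
      simp only [Complex.add_re, Complex.add_im, Complex.one_re, Complex.one_im]
      nlinarith
    nlinarith [norm_nonneg (1+f)]
  linarith



end Stmt17Aux

theorem stmt17 (a : ℝ) (ha : a ∈ Ioo (1 / 2 : ℝ) 1) (b : ℂ) (hb : ‖b‖ = 3) :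
    ∃ (g : ℂ × ℂ → ℂ) (U : Set (ℂ × ℂ)), IsOpen U ∧ closure domD ⊆ U ∧
      DifferentiableOn ℂ g U ∧ g ((a : ℂ), b) = 1 ∧
      ∀ p ∈ closure domD, p ≠ ((a : ℂ), b) → ‖(g p)‖ < 1 := by
  obtain ⟨ha1, ha2⟩ := ha
  have hπ := Real.pi_pos
  have hπ' := Real.pi_lt_d2
  set c : ℂ := (Real.log a : ℂ) + 2 * (Real.pi : ℂ) * Complex.I with hc
  refine ⟨fun p => (1 + p.2 * (starRingEnd ℂ) b / 9 *
      Complex.exp (-(7:ℂ) * Complex.I * (Stmt17Aux.MM p - c) - (Stmt17Aux.MM p - c)^2)) / 2,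
    Stmt17Aux.UU, Stmt17Aux.isOpen_UU, ?_, ?_, ?_, ?_⟩
  · exact (closure_minimal Stmt17Aux.domD_subset_TT Stmt17Aux.isClosed_TT).trans
      Stmt17Aux.TT_subset_UU
  · have hζ : DifferentiableOn ℂ (fun p => Stmt17Aux.MM p - c) Stmt17Aux.UU :=
      Stmt17Aux.diff_MM.sub_const c
    have hG : DifferentiableOn ℂ
        (fun p => -(7:ℂ) * Complex.I * (Stmt17Aux.MM p - c) - (Stmt17Aux.MM p - c)^2)
        Stmt17Aux.UU := (hζ.const_mul _).sub (hζ.pow 2)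
    have hE := hG.cexp
    have hsnd : DifferentiableOn ℂ (fun p : ℂ × ℂ => p.2 * ((starRingEnd ℂ) b * (9:ℂ)⁻¹))
        Stmt17Aux.UU := differentiable_snd.differentiableOn.mul_const _
    have hD : DifferentiableOn ℂ (fun p : ℂ × ℂ =>
        (1 + p.2 * ((starRingEnd ℂ) b * (9:ℂ)⁻¹) *
          Complex.exp (-(7:ℂ) * Complex.I * (Stmt17Aux.MM p - c) - (Stmt17Aux.MM p - c)^2))
          * (2:ℂ)⁻¹) Stmt17Aux.UU := ((hsnd.mul hE).const_add 1).mul_const _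
    exact hD.congr (fun x hx => by ring)
  · have h0 : Stmt17Aux.MM ((a:ℂ), b) = c := by
      simp only [Stmt17Aux.MM]
      rw [if_neg, if_pos]
      · rw [← Complex.ofReal_log (by linarith : (0:ℝ) ≤ a), hc]
      · show 3/2 < ‖b‖; rw [hb]; norm_num
      · show ¬ ((a:ℂ)).re < |((a:ℂ)).im|
        simp only [Complex.ofReal_re, Complex.ofReal_im, abs_zero]
        linarith
    have hb9 : b * (starRingEnd ℂ) b = 9 := by
      rw [Complex.mul_conj, Complex.normSq_eq_norm_sq, hb]; norm_num
    show (1 + b * (starRingEnd ℂ) b / 9 * Complex.exp _) / 2 = 1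
    rw [h0, sub_self, hb9]
    norm_num
  · intro p hpcl hpne
    have hpT : p ∈ Stmt17Aux.TT :=
      (closure_minimal Stmt17Aux.domD_subset_TT Stmt17Aux.isClosed_TT) hpcl
    obtain ⟨hre, him0, him2, himeq⟩ := Stmt17Aux.MM_spec hpT
    obtain ⟨hlo, hhi, hcase⟩ := hpT
    set ζ : ℂ := Stmt17Aux.MM p - c with hζdef
    have hζre : ζ.re = Real.log (‖p.1‖) - Real.log a := by
      simp [hζdef, hc, Complex.sub_re, Complex.add_re, Complex.mul_re, Complex.mul_im,
        Complex.I_re, Complex.I_im, Complex.ofReal_re, Complex.ofReal_im, hre]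
    have hζim : ζ.im = (Stmt17Aux.MM p).im - 2 * Real.pi := by
      simp [hζdef, hc, Complex.sub_im, Complex.add_im, Complex.mul_re, Complex.mul_im,
        Complex.I_re, Complex.I_im, Complex.ofReal_re, Complex.ofReal_im]
    have ht0 : ζ.im ≤ 0 := by rw [hζim]; linarith
    have ht2 : -(2*Real.pi) ≤ ζ.im := by rw [hζim]; linarith
    have h7t : 0 ≤ 7 + ζ.im := by linarith
    set G : ℂ := -(7:ℂ) * Complex.I * ζ - ζ^2 with hGdef
    have hGre : G.re = 7*ζ.im + ζ.im^2 - ζ.re^2 := by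
      rw [hGdef, pow_two]
      simp [Complex.sub_re, Complex.mul_re, Complex.mul_im, Complex.I_re, Complex.I_im,
        Complex.neg_re, Complex.neg_im]
      ring
    have hGle : G.re ≤ 0 := by
      rw [hGre]; exact Stmt17Aux.quad_le _ _ ht0 ht2
    have hexpabs : ‖(Complex.exp G)‖ = Real.exp G.re := Complex.norm_exp G
    have hexple : Real.exp G.re ≤ 1 := Real.exp_le_one_iff.mpr hGle
    have hw3 : ‖p.2‖ ≤ 3 := by
      rcases hcase with ⟨_,_,h⟩|⟨_,h⟩|⟨_,_,_,h⟩ <;> linarith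
    set f : ℂ := p.2 * (starRingEnd ℂ) b / 9 * Complex.exp G with hfdef
    have habsf : ‖f‖ = ‖p.2‖ / 3 * Real.exp G.re := by
      rw [hfdef, norm_mul, norm_div, norm_mul, Complex.norm_conj, hb, hexpabs]
      norm_num
      ring
    have habsf1 : ‖f‖ ≤ 1 := by
      rw [habsf]
      exact Stmt17Aux.prod_le_one _ _ (norm_nonneg p.2) hw3 (Real.exp_pos _) hexple
    have hfne : f ≠ 1 := by
      intro hf1
      have habs1 : ‖p.2‖ / 3 * Real.exp G.re = 1 := by
        rw [← habsf, hf1, norm_one]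
      have hE1 : Real.exp G.re = 1 :=
        Stmt17Aux.prod_eq_one _ _ (norm_nonneg p.2) hw3 (Real.exp_pos _) hexple habs1
      have hGre0 : 7*ζ.im + ζ.im^2 - ζ.re^2 = 0 := by
        rw [← hGre]; exact (Real.exp_eq_one_iff _).mp hE1
      obtain ⟨hx0, ht0'⟩ := Stmt17Aux.quad_eq _ _ ht0 ht2 hGre0
      have hζ0 : ζ = 0 := Complex.ext (by simpa using hx0) (by simpa using ht0')
      have hG0 : G = 0 := by rw [hGdef, hζ0]; ring
      rw [hfdef, hG0, Complex.exp_zero, mul_one] at hf1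
      have hb9 : b * (starRingEnd ℂ) b = 9 := by
        rw [Complex.mul_conj, Complex.normSq_eq_norm_sq, hb]; norm_num
      have hw : p.2 * (starRingEnd ℂ) b = 9 := by
        field_simp at hf1; exact_mod_cast hf1
      have hbne : (starRingEnd ℂ) b ≠ 0 := by
        intro h
        have : b = 0 := by simpa using congrArg (starRingEnd ℂ) h
        rw [this] at hb; simp at hb
      have hw_eq : p.2 = b := by
        have h5 : (p.2 - b) * (starRingEnd ℂ) b = 0 := by rw [sub_mul, hw, hb9]; ring
        rcases mul_eq_zero.mp h5 with h | h
        · exact sub_eq_zero.mp h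
        · exact absurd h hbne
      have hMim : (Stmt17Aux.MM p).im = 2*Real.pi := by
        have h6 : ζ.im = 0 := ht0'
        rw [hζim] at h6; linarith
      have hp1 := himeq hMim
      have hlog : Real.log (‖p.1‖) = Real.log a := by
        have h7 : ζ.re = 0 := hx0
        rw [hζre] at h7; linarith
      have habsa : ‖p.1‖ = a := by
        have h8 : (0:ℝ) < ‖p.1‖ := by linarith
        have h9 : (0:ℝ) < a := by linarith
        rw [← Real.exp_log h8, ← Real.exp_log h9, hlog]
      exact hpne (Prod.ext_iff.mpr ⟨by rw [hp1, habsa], hw_eq⟩)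
    exact Stmt17Aux.peak_lt f habsf1 hfne
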